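/- Let $S \subset R$ be Lie conformal algebras that are finitely generated as $\mathbb{C}[\partial]$-modules, with $S$ a subalgebra of $R$ such that the quotient $\mathbb{C}[\partial]$-module $R/S$ is torsion. Then $S$ is an ideal of $R$ containing the derived subalgebra $[R,R]$; in particular $R/S$ is an abelian Lie conformal algebra. -/

import Mathlib

open scoped BigOperators

/-- A Lie conformal algebra over `ℂ`: a `ℂ[∂]`-module `R` with a `λ`-bracket
`[a λ b] = ∑ₙ (λ^n/n!) • br n a b`. -/
structure LieConformalAlgebra (R : Type*) [AddCommGroup R] [Module ℂ R] where
  der : R →ₗ[ℂ] R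
  br : ℕ → R →ₗ[ℂ] R →ₗ[ℂ] R
  locality : ∀ a b : R, ∃ N : ℕ, ∀ n : ℕ, N ≤ n → br n a b = 0
  sesqui_left : ∀ (n : ℕ) (a b : R),
    br n (der a) b = if n = 0 then 0 else (-(n : ℂ)) • br (n - 1) a b
  sesqui_right : ∀ (n : ℕ) (a b : R),
    br n a (der b) = der (br n a b) + if n = 0 then 0 else (n : ℂ) • br (n - 1) a b
  skew : ∀ (n : ℕ) (a b : R),
    br n a b = -∑ᶠ j : ℕ, (((-1 : ℂ) ^ (n + j)) / (j.factorial : ℂ)) • (der ^ j) (br (n + j) b a)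
  jacobi : ∀ (m n : ℕ) (a b c : R),
    br m a (br n b c) - br n b (br m a c)
      = ∑ j ∈ Finset.range (m + 1), (m.choose j : ℂ) • br (m + n - j) (br j a b) c

namespace LieConformalAlgebra

variable {R : Type*} [AddCommGroup R] [Module ℂ R] (L : LieConformalAlgebra R)

/-- A torsion element of the underlying `ℂ[∂]`-module. -/
def IsTorsion (x : R) : Prop :=
  ∃ p : Polynomial ℂ, p ≠ 0 ∧ Polynomial.aeval L.der p x = 0

/-- `R` is a finitely generated `ℂ[∂]`-module. -/
def IsFinite : Prop :=
  ∃ s : Finset R, ∀ r : R,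
    r ∈ Submodule.span ℂ {x | ∃ g ∈ s, ∃ k : ℕ, x = (L.der ^ k) g}

/-- A `ℂ[∂]`-submodule `S` that is a finitely generated `ℂ[∂]`-module. -/
def IsFiniteSub (S : Submodule ℂ R) : Prop :=
  ∃ s : Finset R, (↑s : Set R) ⊆ (S : Set R) ∧ ∀ r ∈ S,
    r ∈ Submodule.span ℂ {x | ∃ g ∈ s, ∃ k : ℕ, x = (L.der ^ k) g}

/-- A subalgebra: a `ℂ[∂]`-submodule closed under the `λ`-bracket. -/
def IsSubalgebra (S : Submodule ℂ R) : Prop :=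
  (∀ x ∈ S, L.der x ∈ S) ∧ ∀ a ∈ S, ∀ b ∈ S, ∀ n : ℕ, L.br n a b ∈ S

end LieConformalAlgebra

/-- The signed falling-factorial scalar appearing when iterating `sesqui_left`. -/
noncomputable def ffac (n k : ℕ) : ℂ :=
  ∏ i ∈ Finset.range k, ((n : ℂ) - (i : ℂ))

lemma ffac_ne_zero (n k : ℕ) (h : k ≤ n) : ffac n k ≠ 0 := by
  unfold ffac
  rw [Finset.prod_ne_zero_iff]
  intro i hi
  rw [Finset.mem_range] at hi
  have : (i : ℂ) ≠ (n : ℂ) := by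
    rw [Ne, Nat.cast_inj]; omega
  intro hc
  exact this (by linear_combination -hc)

lemma aeval_apply_expand {R : Type*} [AddCommGroup R] [Module ℂ R]
    (L : LieConformalAlgebra R) (p : Polynomial ℂ) (r : R) :
    Polynomial.aeval L.der p r
      = ∑ k ∈ Finset.range (p.natDegree + 1), p.coeff k • (L.der ^ k) r := by
  rw [Polynomial.aeval_eq_sum_range]
  simp [LinearMap.sum_apply, LinearMap.smul_apply]

/-- Iterated `sesqui_left`. -/
lemma br_der_pow_left {R : Type*} [AddCommGroup R] [Module ℂ R]
    (L : LieConformalAlgebra R) (k : ℕ) :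
    ∀ (m : ℕ) (r t : R),
      L.br (m + k) ((L.der ^ k) r) t = ((-1 : ℂ) ^ k * ffac (m + k) k) • L.br m r t := by
  induction k with
  | zero => intro m r t; simp [ffac]
  | succ k ih =>
    intro m r t
    have h1 : (L.der ^ (k + 1)) r = (L.der ^ k) (L.der r) := by
      rw [pow_succ]; rfl
    have h2 : m + (k + 1) = (m + 1) + k := by omega
    rw [h1, h2, ih (m + 1) (L.der r) t, L.sesqui_left]
    simp only [Nat.add_eq_zero, Nat.succ_ne_zero, and_false, if_false,
      Nat.add_sub_cancel, smul_smul]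
    congr 1
    have : ffac (m + 1 + k) (k + 1) = ffac (m + 1 + k) k * ((m : ℂ) + 1) := by
      unfold ffac
      rw [Finset.prod_range_succ]
      congr 1
      push_cast; ring
    rw [← h2] at this ⊢
    rw [this]
    push_cast; ring

open LieConformalAlgebra in
/-- Iterated `sesqui_right`, modulo `S`. -/
lemma br_der_pow_right {R : Type*} [AddCommGroup R] [Module ℂ R]
    (L : LieConformalAlgebra R) (S : Submodule ℂ R) (hder : ∀ x ∈ S, L.der x ∈ S)
    (a : R) (k : ℕ) :
    ∀ (m : ℕ) (b : R), (∀ j, m < j → L.br j a b ∈ S) →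
      L.br (m + k) a ((L.der ^ k) b) - ffac (m + k) k • L.br m a b ∈ S := by
  induction k with
  | zero =>
    intro m b _
    simp [ffac]
  | succ k ih =>
    intro m b hb
    have h1 : (L.der ^ (k + 1)) b = (L.der ^ k) (L.der b) := by
      rw [pow_succ]; rfl
    have h2 : m + (k + 1) = (m + 1) + k := by omega
    have hb' : ∀ j, m + 1 < j → L.br j a (L.der b) ∈ S := by
      intro j hj
      rw [L.sesqui_right]
      have hj0 : j ≠ 0 := by omega
      simp only [hj0, if_false]
      exact S.add_mem (hder _ (hb j (by omega))) (S.smul_mem _ (hb (j - 1) (by omega)))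
    have key := ih (m + 1) (L.der b) hb'
    have hBr : L.br (m + 1) a (L.der b)
        = L.der (L.br (m + 1) a b) + ((m : ℂ) + 1) • L.br m a b := by
      rw [L.sesqui_right]
      simp only [Nat.succ_ne_zero, if_false, Nat.add_sub_cancel]
      push_cast; ring_nf
    have hf : ffac (m + 1 + k) (k + 1) = ffac (m + 1 + k) k * ((m : ℂ) + 1) := by
      unfold ffac
      rw [Finset.prod_range_succ]
      congr 1
      push_cast; ring
    have hmem : L.der (L.br (m + 1) a b) ∈ S := hder _ (hb (m + 1) (by omega))
    have heq : L.br (m + (k + 1)) a ((L.der ^ (k + 1)) b)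
        - ffac (m + (k + 1)) (k + 1) • L.br m a b
        = (L.br (m + 1 + k) a ((L.der ^ k) (L.der b))
            - ffac (m + 1 + k) k • L.br (m + 1) a (L.der b))
          + ffac (m + 1 + k) k • L.der (L.br (m + 1) a b) := by
      rw [h1, h2, hf, hBr]
      module
    rw [heq]
    exact S.add_mem key (S.smul_mem _ hmem)

open LieConformalAlgebra in
/-- a subalgebra of finite cotorsion is an ideal containing the derived
subalgebra, so the quotient is abelian. -/
theorem cotorsion_subalgebra_is_ideal {R : Type*} [AddCommGroup R] [Module ℂ R]
    (L : LieConformalAlgebra R) (hR : L.IsFinite) (S : Submodule ℂ R)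
    (hSfin : L.IsFiniteSub S) (hS : L.IsSubalgebra S)
    (htor : ∀ r : R, ∃ p : Polynomial ℂ, p ≠ 0 ∧ Polynomial.aeval L.der p r ∈ S) :
    (∀ r : R, ∀ t ∈ S, ∀ n : ℕ, L.br n r t ∈ S) ∧
    (∀ a b : R, ∀ n : ℕ, L.br n a b ∈ S) := by
  have part1 : ∀ r : R, ∀ t ∈ S, ∀ n : ℕ, L.br n r t ∈ S := by
    intro r t ht
    obtain ⟨p, hp0, hpS⟩ := htor r
    set d := p.natDegree with hd
    obtain ⟨N, hN⟩ := L.locality r t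
    suffices h : ∀ i m : ℕ, N ≤ m + i → L.br m r t ∈ S by
      intro n
      exact h N n (by omega)
    intro i
    induction i with
    | zero => intro m hm; rw [hN m (by omega)]; exact S.zero_mem
    | succ i ih =>
      intro m hm
      have IH : ∀ j, m < j → L.br j r t ∈ S := fun j hj => ih j (by omega)
      have hX : L.br (m + d) (Polynomial.aeval L.der p r) t ∈ S :=
        hS.2 _ hpS _ ht _
      rw [aeval_apply_expand] at hX
      rw [map_sum, LinearMap.sum_apply] at hX
      have hterm : ∀ k ∈ Finset.range (d + 1),
          (L.br (m + d)) (p.coeff k • (L.der ^ k) r) t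
            = (p.coeff k * ((-1 : ℂ) ^ k * ffac (m + d) k)) • L.br (m + (d - k)) r t := by
        intro k hk
        rw [Finset.mem_range] at hk
        have hmk : m + (d - k) + k = m + d := by omega
        rw [map_smul, LinearMap.smul_apply, ← hmk, br_der_pow_left, smul_smul, hmk]
      rw [Finset.sum_congr rfl hterm, Finset.sum_range_succ] at hX
      have hsmall : ∑ k ∈ Finset.range d,
          (p.coeff k * ((-1 : ℂ) ^ k * ffac (m + d) k)) • L.br (m + (d - k)) r t ∈ S := by
        refine Submodule.sum_mem S fun k hk => ?_
        rw [Finset.mem_range] at hk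
        exact S.smul_mem _ (IH _ (by omega))
      have hlast : (p.coeff d * ((-1 : ℂ) ^ d * ffac (m + d) d)) • L.br (m + (d - d)) r t ∈ S := by
        have := S.sub_mem hX hsmall
        simpa using this
      simp only [Nat.sub_self, Nat.add_zero] at hlast
      have hc : (p.coeff d * ((-1 : ℂ) ^ d * ffac (m + d) d)) ≠ 0 := by
        refine mul_ne_zero ?_ (mul_ne_zero (pow_ne_zero _ (by norm_num)) ?_)
        · exact Polynomial.leadingCoeff_ne_zero.mpr hp0
        · exact ffac_ne_zero _ _ (by omega)
      have := S.smul_mem (p.coeff d * ((-1 : ℂ) ^ d * ffac (m + d) d))⁻¹ hlast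
      rwa [inv_smul_smul₀ hc] at this
  refine ⟨part1, ?_⟩
  intro a b
  obtain ⟨q, hq0, hqS⟩ := htor b
  set d := q.natDegree with hd
  obtain ⟨N, hN⟩ := L.locality a b
  suffices h : ∀ i m : ℕ, N ≤ m + i → L.br m a b ∈ S by
    intro n
    exact h N n (by omega)
  intro i
  induction i with
  | zero => intro m hm; rw [hN m (by omega)]; exact S.zero_mem
  | succ i ih =>
    intro m hm
    have IH : ∀ j, m < j → L.br j a b ∈ S := fun j hj => ih j (by omega)
    have hX : L.br (m + d) a (Polynomial.aeval L.der q b) ∈ S := part1 _ _ hqS _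
    rw [aeval_apply_expand, map_sum] at hX
    have hterm : ∀ k ∈ Finset.range (d + 1),
        (L.br (m + d)) a (q.coeff k • (L.der ^ k) b)
          - (q.coeff k * ffac (m + d) k) • L.br (m + (d - k)) a b ∈ S := by
      intro k hk
      rw [Finset.mem_range] at hk
      have hmk : m + (d - k) + k = m + d := by omega
      have hIH' : ∀ j, m + (d - k) < j → L.br j a b ∈ S := fun j hj => IH j (by omega)
      have := br_der_pow_right L S hS.1 a k (m + (d - k)) b hIH'
      rw [hmk] at this
      have heq : (L.br (m + d)) a (q.coeff k • (L.der ^ k) b)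
          - (q.coeff k * ffac (m + d) k) • L.br (m + (d - k)) a b
          = q.coeff k • ((L.br (m + d)) a ((L.der ^ k) b)
              - ffac (m + d) k • L.br (m + (d - k)) a b) := by
        rw [map_smul]
        module
      rw [heq]
      exact S.smul_mem _ this
    have hsum : ∑ k ∈ Finset.range (d + 1),
        (q.coeff k * ffac (m + d) k) • L.br (m + (d - k)) a b ∈ S := by
      have := Submodule.sum_mem S hterm
      rw [Finset.sum_sub_distrib] at this
      have := S.sub_mem hX this
      simpa [hd] using this
    rw [Finset.sum_range_succ] at hsum
    have hsmall : ∑ k ∈ Finset.range d,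
        (q.coeff k * ffac (m + d) k) • L.br (m + (d - k)) a b ∈ S := by
      refine Submodule.sum_mem S fun k hk => ?_
      rw [Finset.mem_range] at hk
      exact S.smul_mem _ (IH _ (by omega))
    have hlast : (q.coeff d * ffac (m + d) d) • L.br (m + (d - d)) a b ∈ S := by
      have := S.sub_mem hsum hsmall
      simpa using this
    simp only [Nat.sub_self, Nat.add_zero] at hlast
    have hc : (q.coeff d * ffac (m + d) d) ≠ 0 := by
      refine mul_ne_zero ?_ ?_
      · exact Polynomial.leadingCoeff_ne_zero.mpr hq0
      · exact ffac_ne_zero _ _ (by omega)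
    have := S.smul_mem (q.coeff d * ffac (m + d) d)⁻¹ hlast
    rwa [inv_smul_smul₀ hc] at this
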